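/- arXiv:1608.04638 — 2 statements merged into one kernel-verified Lean document; each statement's English description precedes it below -/
import Mathlib

section
/- Let (a_n)_{n≥0} be a sequence in a commutative ring (with a_n = 0 for n < 0 and for n > some bound), and define the formal expressions E(z) = Σ_n (1−z)^n a_n, E⁺(z) = Σ_n (1−z)^n (a_{2n} + a_{2n+1}), and E⁻(z) = Σ_n (1−z)^n (a_{2n} + a_{2n−1}). Then for z̄ = 2z − z² (so that 1 − z̄ = (1−z)²), the identity (2−z)·E(z) = (1−z)·E⁺(z̄) + E⁻(z̄) holds as polynomials in z. -/
open Polynomial Finset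

lemma stmt_3_aux {R : Type*} [CommRing R] (b : ℕ → R) (m : ℕ) :
    (2 - X) * ∑ k ∈ range (2 * m), (1 - X) ^ k * C (b k) =
      (1 - X) * ∑ n ∈ range m, ((1 - X) ^ 2) ^ n * C (b (2 * n) + b (2 * n + 1)) +
        ∑ n ∈ range m, ((1 - X) ^ 2) ^ n * C (b (2 * n) + if n = 0 then 0 else b (2 * n - 1)) +
        ((1 - X) ^ 2) ^ m * C (if m = 0 then 0 else b (2 * m - 1)) := by
  induction m with
  | zero => simp
  | succ m ih =>
    rw [show 2 * (m + 1) = (2 * m) + 1 + 1 by ring, sum_range_succ, sum_range_succ,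
      sum_range_succ, sum_range_succ]
    simp only [Nat.add_sub_cancel, Nat.succ_ne_zero, if_false,
      show (1 - (X:R[X])) ^ (2 * m + 1) = ((1-X)^2)^m * (1-X) by rw [pow_succ, pow_mul],
      show (1 - (X:R[X])) ^ (2 * m) = ((1-X)^2)^m by rw [pow_mul]]
    rw [C_add, C_add]
    linear_combination ih

/-- Dyson/Gunson generating function identity: for a finitely supported sequence `a` in a
commutative ring, with `E(z) = Σ (1-z)^n a_n`, `E⁺(z) = Σ (1-z)^n (a_{2n}+a_{2n+1})`,
`E⁻(z) = Σ (1-z)^n (a_{2n}+a_{2n-1})` (with `a_{-1} = 0`), and `z̄ = 2z - z²` (so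
`1 - z̄ = (1-z)²`), one has `(2-z)·E(z) = (1-z)·E⁺(z̄) + E⁻(z̄)` as polynomials in `z`. -/
theorem stmt_3 {R : Type*} [CommRing R] (a : ℕ → R) (M : ℕ)
    (ha : ∀ n, M < n → a n = 0) :
    (2 - X) * ∑ n ∈ range (M + 1), (1 - X) ^ n * C (a n) =
      (1 - X) * ∑ n ∈ range (M + 1), ((1 - X) ^ 2) ^ n * C (a (2 * n) + a (2 * n + 1)) +
        ∑ n ∈ range (M + 1),
          ((1 - X) ^ 2) ^ n * C (a (2 * n) + if n = 0 then 0 else a (2 * n - 1)) := by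
  have h1 : ∑ n ∈ range (M + 1), (1 - X) ^ n * C (a n)
      = ∑ k ∈ range (2 * (M + 1)), (1 - X) ^ k * C (a k) := by
    apply sum_subset
    · intro x hx
      simp only [mem_range] at *
      omega
    · intro x _ hx
      simp only [mem_range, not_lt] at hx
      rw [ha x (by omega), map_zero, mul_zero]
  rw [h1, stmt_3_aux a (M + 1)]
  have h2 : a (2 * (M + 1) - 1) = 0 := ha _ (by omega)
  simp [h2]
end

section
/- Let s > 0 be fixed and define for 0 < |u| ≤ 2s the function K^N(u) = sin(πu)/(N sin(πu/N)), extended by 1 at u = 0. Then the 2×2 determinant K^N(0)·K^N(0) − K^N(s)·K^N(−s) (i.e., the two-point correlation R₂^{CUE}(s) = det[K^N(x_j − x_k)]_{j,k∈{0,s}}) satisfies R₂^{CUE}(s) = 1 − sin²(πs)/(π²s²) − sin²(πs)/3 · N^{−2} + O(N^{−4}) as N → ∞. -/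
open Real Filter Asymptotics

private lemma sum6_aux (y : ℝ) : ∑ m ∈ Finset.range 6, ((y:ℂ) * Complex.I) ^ m / m.factorial
    + ∑ m ∈ Finset.range 6, ((-y:ℂ) * Complex.I) ^ m / m.factorial
    = 2 * (1 - (y:ℂ)^2/2 + (y:ℂ)^4/24) := by
  simp [Finset.sum_range_succ, Nat.factorial]
  apply Complex.ext <;> simp [Complex.ext_iff, pow_succ, div_eq_mul_inv, Complex.normSq] <;> ring

private lemma cos_bound6_aux {x : ℝ} (hx : |x| ≤ 1) :
    |Real.cos x - (1 - x^2/2 + x^4/24)| ≤ |x|^6 * (7/4320) := by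
  have key : (Real.cos x : ℂ) - ((1 - x^2/2 + x^4/24 : ℝ) : ℂ)
      = ((Complex.exp (x * Complex.I)
          - ∑ m ∈ Finset.range 6, ((x:ℂ) * Complex.I) ^ m / m.factorial)
        + (Complex.exp ((-x : ℝ) * Complex.I)
          - ∑ m ∈ Finset.range 6, (((-x:ℝ):ℂ) * Complex.I) ^ m / m.factorial)) / 2 := by
    have h := sum6_aux x
    rw [Complex.ofReal_cos, Complex.cos]
    push_cast at h ⊢
    linear_combination h / 2
  have h1 : ‖(x:ℂ) * Complex.I‖ ≤ 1 := by simpa using hx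
  have h2 : ‖((-x:ℝ):ℂ) * Complex.I‖ ≤ 1 := by simpa using hx
  have e1 : ‖(x:ℂ) * Complex.I‖ = |x| := by simp
  have e2 : ‖((-x:ℝ):ℂ) * Complex.I‖ = |x| := by simp
  have b1 := (Complex.exp_bound h1 (by norm_num : 0 < 6)).trans
    (le_of_eq (by rw [e1]; norm_num [Nat.factorial]) :
      ‖(x:ℂ) * Complex.I‖ ^ 6 * (↑(Nat.succ 6) * ((Nat.factorial 6 : ℕ) * (6:ℕ) : ℝ)⁻¹)
        ≤ |x|^6 * (7/4320))
  have b2 := (Complex.exp_bound h2 (by norm_num : 0 < 6)).trans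
    (le_of_eq (by rw [e2]; norm_num [Nat.factorial]) :
      ‖((-x:ℝ):ℂ) * Complex.I‖ ^ 6
          * (↑(Nat.succ 6) * ((Nat.factorial 6 : ℕ) * (6:ℕ) : ℝ)⁻¹)
        ≤ |x|^6 * (7/4320))
  have habs : |Real.cos x - (1 - x^2/2 + x^4/24)|
      = ‖(Real.cos x : ℂ) - ((1 - x^2/2 + x^4/24 : ℝ) : ℂ)‖ := by
    rw [← Complex.ofReal_sub, Complex.norm_real, Real.norm_eq_abs]
  rw [habs, key, norm_div]
  have h2' : ‖(2:ℂ)‖ = 2 := by norm_num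
  rw [h2']
  have tri := norm_add_le
    (Complex.exp (x * Complex.I) - ∑ m ∈ Finset.range 6, ((x:ℂ) * Complex.I) ^ m / m.factorial)
    (Complex.exp ((-x : ℝ) * Complex.I)
      - ∑ m ∈ Finset.range 6, (((-x:ℝ):ℂ) * Complex.I) ^ m / m.factorial)
  linarith

private lemma sin_half_le_aux {x : ℝ} (h0 : 0 < x) (h2 : x ≤ 1/2) : x/2 ≤ Real.sin x := by
  have := Real.sin_gt_sub_cube h0
  nlinarith [mul_nonneg (mul_nonneg h0.le h0.le) h0.le, sq_nonneg x]

private lemma hnum_aux {x : ℝ} (h0 : 0 < x) (h2 : x ≤ 1/2) :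
    |Real.sin x ^ 2 * (1 + x^2/3) - x^2| ≤ x^6 := by
  have h2x : |2*x| ≤ 1 := by rw [abs_of_pos (by linarith)]; linarith
  have hc := cos_bound6_aux h2x
  rw [show |2*x| = 2*x from abs_of_pos (by linarith)] at hc
  rw [abs_le] at hc
  obtain ⟨hc1, hc2⟩ := hc
  set e := Real.cos (2*x) - (1 - (2*x)^2/2 + (2*x)^4/24) with he
  have hcos : Real.cos (2*x) = 1 - 2*x^2 + (2/3)*x^4 + e := by rw [he]; ring
  have hsq : Real.sin x ^ 2 = 1/2 - Real.cos (2*x)/2 := Real.sin_sq_eq_half_sub x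
  have hx2 : x^2 ≤ 1/4 := by nlinarith
  have hx8 : x^6 * x^2 ≤ x^6 * (1/4) :=
    mul_le_mul_of_nonneg_left hx2 (pow_pos h0 6).le
  have he1 : -((2*x)^6 * (7/4320)) * x^2 ≤ e * x^2 :=
    mul_le_mul_of_nonneg_right hc1 (sq_nonneg x)
  have he2 : e * x^2 ≤ (2*x)^6 * (7/4320) * x^2 :=
    mul_le_mul_of_nonneg_right hc2 (sq_nonneg x)
  rw [abs_le, hsq, hcos]
  constructor <;> nlinarith [pow_pos h0 6, sq_nonneg x]

private lemma key_ineq_aux {x : ℝ} (h0 : 0 < x) (h2 : x ≤ 1/2) :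
    |1 + x^2/3 - x^2/(Real.sin x)^2| ≤ 4 * x^4 := by
  have hsl := sin_half_le_aux h0 h2
  have hspos : 0 < Real.sin x := lt_of_lt_of_le (by linarith) hsl
  have hden : x^2/4 ≤ Real.sin x ^ 2 := by nlinarith
  have heq : 1 + x^2/3 - x^2/(Real.sin x)^2
      = (Real.sin x ^ 2 * (1 + x^2/3) - x^2) / Real.sin x ^ 2 := by
    field_simp
  rw [heq, abs_div, abs_of_pos (by positivity : (0:ℝ) < Real.sin x ^ 2)]
  calc |Real.sin x ^ 2 * (1 + x^2/3) - x^2| / Real.sin x ^ 2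
      ≤ x^6 / (x^2/4) := by
        apply div_le_div₀ (by positivity) (hnum_aux h0 h2) (by positivity) hden
    _ = 4 * x^4 := by field_simp

/-- The CUE kernel as a function of the difference variable, extended by `1` at `0`. -/
noncomputable def cueKdiff (N : ℝ) (u : ℝ) : ℝ :=
  if u = 0 then 1 else Real.sin (π * u) / (N * Real.sin (π * u / N))

/-- Expansion of the CUE two-point correlation function
`R₂(s) = K^N(0)² - K^N(s)K^N(-s)`:
`R₂(s) = 1 - sin²(πs)/(π²s²) - sin²(πs)/3 · N⁻² + O(N⁻⁴)` as `N → ∞`. -/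
theorem stmt_11 (s : ℝ) (hs : 0 < s) :
    (fun N : ℝ =>
        (cueKdiff N 0 * cueKdiff N 0 - cueKdiff N s * cueKdiff N (-s)) -
          (1 - Real.sin (π * s) ^ 2 / (π ^ 2 * s ^ 2) -
            Real.sin (π * s) ^ 2 / 3 * N⁻¹ ^ 2))
      =O[atTop] (fun N : ℝ => N⁻¹ ^ 4) := by
  rw [isBigO_iff]
  refine ⟨4 * Real.sin (π*s)^2 * π^2 * s^2, ?_⟩
  filter_upwards [eventually_ge_atTop (max 1 (2*π*s))] with N hN
  have hN1 : (1:ℝ) ≤ N := le_trans (le_max_left _ _) hN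
  have hN2 : 2*π*s ≤ N := le_trans (le_max_right _ _) hN
  have hNpos : 0 < N := by linarith
  have hπ : 0 < π := Real.pi_pos
  set x := π*s/N with hxdef
  have hx0 : 0 < x := by positivity
  have hx2 : x ≤ 1/2 := by
    rw [hxdef, div_le_iff₀ hNpos]; nlinarith
  have hsinx : 0 < Real.sin x := lt_of_lt_of_le (by linarith) (sin_half_le_aux hx0 hx2)
  have hK0 : cueKdiff N 0 = 1 := by simp [cueKdiff]
  have hKs : cueKdiff N s = Real.sin (π*s) / (N * Real.sin x) := by
    rw [cueKdiff, if_neg hs.ne']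
  have hKns : cueKdiff N (-s) = Real.sin (π*s) / (N * Real.sin x) := by
    rw [cueKdiff, if_neg (neg_ne_zero.mpr hs.ne')]
    rw [show π * -s = -(π*s) by ring, show -(π*s)/N = -(π*s/N) by ring,
      Real.sin_neg, Real.sin_neg]
    rw [mul_neg, neg_div_neg_eq]
  have hsx : Real.sin x ≠ 0 := hsinx.ne'
  have heq : (cueKdiff N 0 * cueKdiff N 0 - cueKdiff N s * cueKdiff N (-s)) -
          (1 - Real.sin (π * s) ^ 2 / (π ^ 2 * s ^ 2) -
            Real.sin (π * s) ^ 2 / 3 * N⁻¹ ^ 2)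
      = (Real.sin (π*s)^2 / (π^2*s^2)) * (1 + x^2/3 - x^2/(Real.sin x)^2) := by
    rw [hK0, hKs, hKns, hxdef]
    field_simp
    ring
  rw [heq, Real.norm_eq_abs, Real.norm_eq_abs, abs_mul,
    abs_of_nonneg (by positivity : (0:ℝ) ≤ Real.sin (π*s)^2 / (π^2*s^2))]
  calc Real.sin (π*s)^2 / (π^2*s^2) * |1 + x^2/3 - x^2/(Real.sin x)^2|
      ≤ Real.sin (π*s)^2 / (π^2*s^2) * (4 * x^4) :=
        mul_le_mul_of_nonneg_left (key_ineq_aux hx0 hx2) (by positivity)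
    _ = 4 * Real.sin (π*s)^2 * π^2 * s^2 * |N⁻¹^4| := by
        rw [abs_of_nonneg (by positivity : (0:ℝ) ≤ N⁻¹^4), hxdef]
        field_simp
end
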